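/- Let Ω and Ω' be positive semidefinite n×n complex matrices, let X be an n×n complex matrix with 0 ≤ X ≤ I, and let A be an n×n complex matrix with operator norm ‖A‖ ≤ 1. Then |trace(A (Ω^{1/2} X Ω^{1/2} − Ω'^{1/2} X Ω'^{1/2}))| ≤ ((trace Ω)^{1/2} + (trace Ω')^{1/2}) · ‖Ω^{1/2} − Ω'^{1/2}‖_F. -/

import Mathlib

open Matrix ComplexOrder

set_option synthInstance.maxHeartbeats 1000000
set_option maxHeartbeats 1000000

namespace Matrix.PosSemidef

/-- The positive semidefinite square root of a positive semidefinite matrix (the definition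
`Matrix.PosSemidef.sqrt` of the older Mathlib, since removed). -/
noncomputable def sqrt {n : Type*} [Fintype n] [DecidableEq n] {𝕜 : Type*} [RCLike 𝕜]
    {A : Matrix n n 𝕜} (hA : PosSemidef A) : Matrix n n 𝕜 :=
  hA.1.eigenvectorUnitary.1 * diagonal ((↑) ∘ Real.sqrt ∘ hA.1.eigenvalues) *
  (star hA.1.eigenvectorUnitary : Matrix n n 𝕜)

lemma posSemidef_sqrt {n : Type*} [Fintype n] [DecidableEq n] {𝕜 : Type*} [RCLike 𝕜]
    {A : Matrix n n 𝕜} (hA : PosSemidef A) : hA.sqrt.PosSemidef := by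
  have hD : (diagonal ((↑) ∘ Real.sqrt ∘ hA.1.eigenvalues : n → 𝕜)).PosSemidef := by
    rw [posSemidef_diagonal_iff]
    intro i
    simp only [Function.comp_apply, RCLike.ofReal_nonneg]
    exact Real.sqrt_nonneg _
  have := hD.mul_mul_conjTranspose_same (hA.1.eigenvectorUnitary.1)
  rw [sqrt, star_eq_conjTranspose]
  exact this

lemma sqrt_mul_self {n : Type*} [Fintype n] [DecidableEq n] {𝕜 : Type*} [RCLike 𝕜]
    {A : Matrix n n 𝕜} (hA : PosSemidef A) : hA.sqrt * hA.sqrt = A := by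
  have hU := Unitary.coe_star_mul_self hA.1.eigenvectorUnitary
  have hDD : diagonal ((↑) ∘ Real.sqrt ∘ hA.1.eigenvalues : n → 𝕜)
      * diagonal ((↑) ∘ Real.sqrt ∘ hA.1.eigenvalues : n → 𝕜)
      = diagonal (RCLike.ofReal ∘ hA.1.eigenvalues) := by
    rw [diagonal_mul_diagonal]
    congr 1
    funext i
    simp only [Function.comp_apply, ← RCLike.ofReal_mul]
    rw [Real.mul_self_sqrt (hA.eigenvalues_nonneg i)]
  conv_rhs => rw [hA.1.spectral_theorem, Unitary.conjStarAlgAut_apply]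
  rw [sqrt]
  calc _ = (hA.1.eigenvectorUnitary.1 * diagonal ((↑) ∘ Real.sqrt ∘ hA.1.eigenvalues)) *
        ((star hA.1.eigenvectorUnitary : Matrix n n 𝕜) * hA.1.eigenvectorUnitary.1) *
        (diagonal ((↑) ∘ Real.sqrt ∘ hA.1.eigenvalues) *
        (star hA.1.eigenvectorUnitary : Matrix n n 𝕜)) := by simp only [Matrix.mul_assoc]
    _ = _ := by rw [hU, Matrix.mul_one, ← Matrix.mul_assoc, Matrix.mul_assoc _ _ (diagonal _), hDD]

end Matrix.PosSemidef

section Aux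

variable {n : ℕ}

/-- trace of a PSD matrix has nonnegative real part -/
lemma aux_trace_re_nonneg {M : Matrix (Fin n) (Fin n) ℂ} (hM : M.PosSemidef) :
    0 ≤ M.trace.re := by
  rw [Matrix.trace]
  have h : ∀ i, 0 ≤ (M i i).re := by
    intro i
    have h := hM.dotProduct_mulVec_nonneg (Pi.single i 1)
    simp [dotProduct, Matrix.mulVec, Pi.single_apply, Finset.mul_sum,
      apply_ite, Finset.sum_ite_eq, Finset.sum_ite_eq'] at h
    exact (Complex.nonneg_iff.mp h).1
  calc (0:ℝ) ≤ ∑ i, (M.diag i).re := Finset.sum_nonneg fun i _ => h i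
  _ = (∑ i, M.diag i).re := by rw [Complex.re_sum]

lemma aux_key_le (M P : Matrix (Fin n) (Fin n) ℂ) (hP : (1 - P).PosSemidef) :
    (Mᴴ * P * M).trace.re ≤ (Mᴴ * M).trace.re := by
  have h := aux_trace_re_nonneg (hP.conjTranspose_mul_mul_same M)
  have he : Mᴴ * (1 - P) * M = Mᴴ * M - Mᴴ * P * M := by noncomm_ring
  rw [he, Matrix.trace_sub, Complex.sub_re] at h
  linarith

lemma aux_one_sub_sq {X : Matrix (Fin n) (Fin n) ℂ}
    (hX0 : X.PosSemidef) (hX1 : (1 - X).PosSemidef) : (1 - X * X).PosSemidef := by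
  have h1 := hX1.conjTranspose_mul_mul_same X
  have h2 := hX0.conjTranspose_mul_mul_same (1 - X)
  have he : 1 - X * X = (1 - X) + (Xᴴ * (1 - X) * X + (1 - X)ᴴ * X * (1 - X)) := by
    rw [hX0.1, hX1.1]; noncomm_ring
  rw [he]
  exact hX1.add (h1.add h2)

lemma aux_contraction {A : Matrix (Fin n) (Fin n) ℂ}
    (hA : ‖Matrix.toEuclideanCLM (𝕜 := ℂ) A‖ ≤ 1) : (1 - Aᴴ * A).PosSemidef := by
  refine PosSemidef.of_dotProduct_mulVec_nonneg ?_ ?_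
  · simp [Matrix.IsHermitian, Matrix.conjTranspose_sub, Matrix.conjTranspose_mul]
  · intro x
    have hv : star x ⬝ᵥ (Aᴴ * A) *ᵥ x = star (A *ᵥ x) ⬝ᵥ (A *ᵥ x) := by
      rw [← Matrix.mulVec_mulVec, Matrix.dotProduct_mulVec, ← Matrix.star_mulVec]
    have hnorm : ∀ w : Fin n → ℂ, star w ⬝ᵥ w
        = ((‖((WithLp.equiv 2 _).symm w : EuclideanSpace ℂ (Fin n))‖ ^ 2 : ℝ) : ℂ) := by
      intro w
      rw [EuclideanSpace.norm_eq]
      rw [Real.sq_sqrt (by positivity)]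
      push_cast
      simp only [dotProduct, Pi.star_apply, WithLp.equiv_symm_apply, PiLp.toLp_apply]
      congr 1
      ext i
      rw [← Complex.ofReal_pow, Complex.sq_norm,
        Complex.normSq_eq_conj_mul_self]
      rfl
    have hle : ‖((WithLp.equiv 2 _).symm (A *ᵥ x) : EuclideanSpace ℂ (Fin n))‖
        ≤ ‖((WithLp.equiv 2 _).symm x : EuclideanSpace ℂ (Fin n))‖ := by
      have h1 := ContinuousLinearMap.le_opNorm (Matrix.toEuclideanCLM (𝕜 := ℂ) A)
        ((WithLp.equiv 2 _).symm x)
      rw [WithLp.equiv_symm_apply, Matrix.toEuclideanCLM_toLp] at h1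
      calc _ ≤ _ := h1
        _ ≤ _ := by
            have := mul_le_mul_of_nonneg_right hA
              (norm_nonneg ((WithLp.equiv 2 _).symm x : EuclideanSpace ℂ (Fin n)))
            rw [one_mul] at this; exact this
    rw [Matrix.sub_mulVec, dotProduct_sub, Matrix.one_mulVec, hv, hnorm, hnorm]
    rw [← Complex.ofReal_sub, Complex.zero_le_real]
    have h2 : ‖((WithLp.equiv 2 _).symm (A *ᵥ x) : EuclideanSpace ℂ (Fin n))‖ ^ 2
        ≤ ‖((WithLp.equiv 2 _).symm x : EuclideanSpace ℂ (Fin n))‖ ^ 2 :=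
      pow_le_pow_left₀ (norm_nonneg _) hle 2
    linarith

lemma aux_cs (M N : Matrix (Fin n) (Fin n) ℂ) :
    ‖(Mᴴ * N).trace‖
      ≤ Real.sqrt ((Mᴴ * M).trace.re) * Real.sqrt ((Nᴴ * N).trace.re) := by
  classical
  set x : EuclideanSpace ℂ (Fin n × Fin n) :=
    (WithLp.equiv 2 _).symm (fun p => M p.1 p.2) with hx
  set y : EuclideanSpace ℂ (Fin n × Fin n) :=
    (WithLp.equiv 2 _).symm (fun p => N p.1 p.2) with hy
  have keyr : ∀ (P Q : Matrix (Fin n) (Fin n) ℂ),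
      (Pᴴ * Q).trace = ∑ p : Fin n × Fin n, (starRingEnd ℂ) (P p.1 p.2) * Q p.1 p.2 := by
    intro P Q
    simp only [Matrix.trace, Matrix.diag_apply, Matrix.mul_apply,
      Matrix.conjTranspose_apply, Fintype.sum_prod_type, RCLike.star_def]
    exact Finset.sum_comm
  have hinner : (inner ℂ x y : ℂ) = (Mᴴ * N).trace := by
    rw [keyr, PiLp.inner_apply]
    simp only [RCLike.inner_apply']
    rfl
  have hn : ∀ (P : Matrix (Fin n) (Fin n) ℂ) (z : EuclideanSpace ℂ (Fin n × Fin n)),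
      z = (WithLp.equiv 2 _).symm (fun p => P p.1 p.2) →
      ‖z‖ = Real.sqrt ((Pᴴ * P).trace.re) := by
    intro P z hz
    rw [EuclideanSpace.norm_eq]
    congr 1
    rw [keyr, Complex.re_sum]
    congr 1
    ext p
    rw [hz]
    simp only [WithLp.equiv_symm_apply, PiLp.toLp_apply]
    rw [← Complex.normSq_eq_conj_mul_self, Complex.normSq_eq_norm_sq]
    rfl
  have hcs := norm_inner_le_norm (𝕜 := ℂ) x y
  rw [hinner, hn M x hx, hn N y hy] at hcs
  exact hcs

end Aux

/-- For positive semidefinite `Ω`, `Ω'`, a matrix `0 ≤ X ≤ I` and `A` with operator norm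
`‖A‖ ≤ 1`, one has
`|tr(A(Ω^{1/2}XΩ^{1/2} − Ω'^{1/2}XΩ'^{1/2}))| ≤ (√tr Ω + √tr Ω')·‖Ω^{1/2} − Ω'^{1/2}‖_F`. -/
theorem stmt11 {n : ℕ} (Ω Ω' X A : Matrix (Fin n) (Fin n) ℂ)
    (hΩ : Ω.PosSemidef) (hΩ' : Ω'.PosSemidef)
    (hX0 : X.PosSemidef) (hX1 : (1 - X).PosSemidef)
    (hA : ‖Matrix.toEuclideanCLM (𝕜 := ℂ) A‖ ≤ 1) :
    ‖(A * (hΩ.sqrt * X * hΩ.sqrt - hΩ'.sqrt * X * hΩ'.sqrt)).trace‖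
      ≤ (Real.sqrt Ω.trace.re + Real.sqrt Ω'.trace.re)
          * Real.sqrt (((hΩ.sqrt - hΩ'.sqrt)ᴴ * (hΩ.sqrt - hΩ'.sqrt)).trace.re) := by
  set B := hΩ.sqrt with hBdef
  set C := hΩ'.sqrt with hCdef
  set D := B - C with hDdef
  have hB : B.PosSemidef := hΩ.posSemidef_sqrt
  have hC : C.PosSemidef := hΩ'.posSemidef_sqrt
  have hBB : B * B = Ω := hΩ.sqrt_mul_self
  have hCC : C * C = Ω' := hΩ'.sqrt_mul_self
  have hD : Dᴴ = D := by rw [hDdef, Matrix.conjTranspose_sub, hB.1, hC.1]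
  -- contraction facts
  have hX2 : (1 - X * X).PosSemidef := aux_one_sub_sq hX0 hX1
  have hAHA : (1 - Aᴴ * A).PosSemidef := aux_contraction hA
  have hAAH : (1 - A * Aᴴ).PosSemidef := by
    have hstar : (Matrix.toEuclideanCLM (𝕜 := ℂ) Aᴴ)
        = star (Matrix.toEuclideanCLM (𝕜 := ℂ) A) := by
      rw [← Matrix.star_eq_conjTranspose, map_star]
    have hA' : ‖Matrix.toEuclideanCLM (𝕜 := ℂ) Aᴴ‖ ≤ 1 := by
      rw [hstar, ContinuousLinearMap.star_eq_adjoint]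
      exact le_of_eq_of_le (ContinuousLinearMap.adjoint.norm_map _) hA
    have := aux_contraction hA'
    rwa [Matrix.conjTranspose_conjTranspose] at this
  -- decomposition of the trace
  have hdec : (A * (B * X * B - C * X * C)).trace
      = (Dᴴ * (X * B * A)).trace + (Dᴴ * (A * C * X)).trace := by
    rw [hD]
    have e1 : A * (B * X * B - C * X * C) = A * (D * X * B) + (A * C * X) * D := by
      rw [hDdef]; noncomm_ring
    rw [e1, Matrix.trace_add, Matrix.trace_mul_comm A (D * X * B),
      Matrix.trace_mul_comm (A * C * X) D]
    have e2 : D * X * B * A = D * (X * B * A) := by noncomm_ring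
    rw [e2]
  have bound1 : ‖(Dᴴ * (X * B * A)).trace‖
      ≤ Real.sqrt ((Dᴴ * D).trace.re) * Real.sqrt (Ω.trace.re) := by
    refine (aux_cs D (X * B * A)).trans ?_
    refine mul_le_mul_of_nonneg_left ?_ (Real.sqrt_nonneg _)
    refine Real.sqrt_le_sqrt ?_
    have e : (X * B * A)ᴴ * (X * B * A) = (B * A)ᴴ * (X * X) * (B * A) := by
      simp only [Matrix.conjTranspose_mul, hX0.1.eq]; noncomm_ring
    rw [e]
    refine (aux_key_le (B * A) (X * X) hX2).trans ?_
    have e2 : ((B * A)ᴴ * (B * A)).trace = (Bᴴ * (A * Aᴴ) * B).trace := by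
      calc ((B * A)ᴴ * (B * A)).trace
          = (Aᴴ * Bᴴ * (B * A)).trace := by rw [Matrix.conjTranspose_mul]
        _ = ((B * A) * Aᴴ * Bᴴ).trace := by rw [Matrix.trace_mul_cycle]
        _ = (Bᴴ * (A * Aᴴ) * B).trace := by rw [hB.1]; simp only [Matrix.mul_assoc]
    rw [e2]
    refine (aux_key_le B (A * Aᴴ) hAAH).trans ?_
    rw [hB.1, hBB]
  have bound2 : ‖(Dᴴ * (A * C * X)).trace‖
      ≤ Real.sqrt ((Dᴴ * D).trace.re) * Real.sqrt (Ω'.trace.re) := by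
    refine (aux_cs D (A * C * X)).trans ?_
    refine mul_le_mul_of_nonneg_left ?_ (Real.sqrt_nonneg _)
    refine Real.sqrt_le_sqrt ?_
    have e : (A * C * X)ᴴ * (A * C * X) = (C * X)ᴴ * (Aᴴ * A) * (C * X) := by
      simp only [Matrix.conjTranspose_mul]; noncomm_ring
    rw [e]
    refine (aux_key_le (C * X) (Aᴴ * A) hAHA).trans ?_
    have e2 : ((C * X)ᴴ * (C * X)).trace = (Cᴴ * (X * X) * C).trace := by
      calc ((C * X)ᴴ * (C * X)).trace
          = (Xᴴ * Cᴴ * (C * X)).trace := by rw [Matrix.conjTranspose_mul]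
        _ = ((C * X) * Xᴴ * Cᴴ).trace := by rw [Matrix.trace_mul_cycle]
        _ = (Cᴴ * (X * X) * C).trace := by rw [hX0.1, hC.1]; simp only [Matrix.mul_assoc]
    rw [e2]
    refine (aux_key_le C (X * X) hX2).trans ?_
    rw [hC.1, hCC]
  rw [hdec]
  refine (norm_add_le _ _).trans ?_
  calc ‖(Dᴴ * (X * B * A)).trace‖ + ‖(Dᴴ * (A * C * X)).trace‖
      ≤ Real.sqrt ((Dᴴ * D).trace.re) * Real.sqrt (Ω.trace.re)
        + Real.sqrt ((Dᴴ * D).trace.re) * Real.sqrt (Ω'.trace.re) := add_le_add bound1 bound2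
    _ = (Real.sqrt Ω.trace.re + Real.sqrt Ω'.trace.re) * Real.sqrt ((Dᴴ * D).trace.re) := by
        ring
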